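/- Let ψ₁,…,ψ_n ∈ ℂ^m be unit vectors with mutual coherence μ, let x₁,…,x_k be complex scalars with |x₁| ≥ … ≥ |x_k| > 0, and suppose k < (1/2)(1 + 1/μ). Then for every index i with k < i ≤ n, |∑_{t=1}^k x_t ⟨ψ₁, ψ_t⟩| > |∑_{t=1}^k x_t ⟨ψ_i, ψ_t⟩|. -/
import Mathlib


open scoped InnerProductSpace

theorem stmt_2 (m n k : ℕ) (hk : 1 ≤ k) (hkn : k ≤ n)
    (ψ : Fin n → EuclideanSpace ℂ (Fin m)) (hnorm : ∀ i, ‖ψ i‖ = 1)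
    (μ : ℝ) (hμ0 : 0 < μ) (hμ : ∀ i j : Fin n, i ≠ j → ‖⟪ψ i, ψ j⟫_ℂ‖ ≤ μ)
    (x : Fin k → ℂ) (hdec : ∀ s t : Fin k, s ≤ t → ‖x t‖ ≤ ‖x s‖)
    (hnz : ∀ t : Fin k, x t ≠ 0)
    (hsparse : (k : ℝ) < (1 / 2) * (1 + 1 / μ)) :
    ∀ i : Fin n, k ≤ (i : ℕ) →
      ‖∑ t : Fin k, x t * ⟪ψ ⟨0, by omega⟩, ψ (Fin.castLE hkn t)⟫_ℂ‖ >
        ‖∑ t : Fin k, x t * ⟪ψ i, ψ (Fin.castLE hkn t)⟫_ℂ‖ := by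
  intro i hi
  set t0 : Fin k := ⟨0, hk⟩ with ht0
  set i0 : Fin n := ⟨0, by omega⟩ with hi0
  have hx0 : (0:ℝ) < ‖x t0‖ := norm_pos_iff.mpr (hnz t0)
  have hxle : ∀ t : Fin k, ‖x t‖ ≤ ‖x t0‖ := fun t => hdec t0 t (by
    simp [ht0, Fin.le_def])
  -- RHS bound
  have hRHS : ‖∑ t : Fin k, x t * ⟪ψ i, ψ (Fin.castLE hkn t)⟫_ℂ‖
      ≤ (k : ℝ) * μ * ‖x t0‖ := by
    calc ‖∑ t : Fin k, x t * ⟪ψ i, ψ (Fin.castLE hkn t)⟫_ℂ‖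
        ≤ ∑ t : Fin k, ‖x t * ⟪ψ i, ψ (Fin.castLE hkn t)⟫_ℂ‖ := norm_sum_le _ _
      _ ≤ ∑ t : Fin k, ‖x t0‖ * μ := by
          refine Finset.sum_le_sum fun t _ => ?_
          rw [norm_mul]
          refine mul_le_mul (hxle t) (hμ i _ ?_) (norm_nonneg _) (norm_nonneg _)
          intro h
          have : (i : ℕ) = (t : ℕ) := by
            simpa [Fin.ext_iff] using h
          omega
      _ = (k : ℝ) * μ * ‖x t0‖ := by
          simp [Finset.sum_const, Finset.card_univ]
          ring
  -- LHS bound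
  have hcast : Fin.castLE hkn t0 = i0 := by
    simp [ht0, hi0, Fin.ext_iff]
  have hself : ⟪ψ i0, ψ i0⟫_ℂ = 1 := by
    rw [inner_self_eq_norm_sq_to_K, hnorm i0]
    norm_num
  have hsplit : ∑ t : Fin k, x t * ⟪ψ i0, ψ (Fin.castLE hkn t)⟫_ℂ
      = x t0 + ∑ t ∈ Finset.univ.erase t0, x t * ⟪ψ i0, ψ (Fin.castLE hkn t)⟫_ℂ := by
    rw [← Finset.add_sum_erase _ _ (Finset.mem_univ t0), hcast, hself, mul_one]
  have herase : ‖∑ t ∈ Finset.univ.erase t0, x t * ⟪ψ i0, ψ (Fin.castLE hkn t)⟫_ℂ‖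
      ≤ ((k : ℝ) - 1) * μ * ‖x t0‖ := by
    calc ‖∑ t ∈ Finset.univ.erase t0, x t * ⟪ψ i0, ψ (Fin.castLE hkn t)⟫_ℂ‖
        ≤ ∑ t ∈ Finset.univ.erase t0, ‖x t * ⟪ψ i0, ψ (Fin.castLE hkn t)⟫_ℂ‖ :=
          norm_sum_le _ _
      _ ≤ ∑ t ∈ Finset.univ.erase t0, ‖x t0‖ * μ := by
          refine Finset.sum_le_sum fun t ht => ?_
          rw [norm_mul]
          refine mul_le_mul (hxle t) (hμ i0 _ ?_) (norm_nonneg _) (norm_nonneg _)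
          intro h
          apply Finset.ne_of_mem_erase ht
          have : (t : ℕ) = 0 := by
            simpa [hi0, Fin.ext_iff] using h.symm
          simp [ht0, Fin.ext_iff, this]
      _ = ((k : ℝ) - 1) * μ * ‖x t0‖ := by
          rw [Finset.sum_const, Finset.card_erase_of_mem (Finset.mem_univ t0),
            Finset.card_univ, Fintype.card_fin, nsmul_eq_mul, Nat.cast_sub hk]
          push_cast
          ring
  have hLHS : ‖x t0‖ - ((k:ℝ) - 1) * μ * ‖x t0‖
      ≤ ‖∑ t : Fin k, x t * ⟪ψ i0, ψ (Fin.castLE hkn t)⟫_ℂ‖ := by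
    rw [hsplit]
    have := norm_add_le (x t0 + ∑ t ∈ Finset.univ.erase t0,
        x t * ⟪ψ i0, ψ (Fin.castLE hkn t)⟫_ℂ)
        (-(∑ t ∈ Finset.univ.erase t0, x t * ⟪ψ i0, ψ (Fin.castLE hkn t)⟫_ℂ))
    simp only [add_neg_cancel_right, norm_neg] at this
    linarith [herase]
  -- arithmetic
  have h2 : 2 * (k:ℝ) * μ < 1 + μ := by
    have hinv : μ * (1/μ) = 1 := mul_one_div_cancel (ne_of_gt hμ0)
    nlinarith [mul_lt_mul_of_pos_right hsparse hμ0]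
  have : (k:ℝ) * μ * ‖x t0‖ < ‖x t0‖ - ((k:ℝ) - 1) * μ * ‖x t0‖ := by
    nlinarith [hx0]
  calc ‖∑ t : Fin k, x t * ⟪ψ i, ψ (Fin.castLE hkn t)⟫_ℂ‖
      ≤ (k:ℝ) * μ * ‖x t0‖ := hRHS
    _ < ‖x t0‖ - ((k:ℝ) - 1) * μ * ‖x t0‖ := this
    _ ≤ _ := hLHS
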